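/- In an Archimedean vector lattice X with a strong unit e, relative uniform convergence is unbounded: if (x_α) is a net in X₊ with x_α ∧ u →_ru 0 for every u ∈ X₊, then x_α →_ru 0. -/

import Mathlib

open Filter Pointwise

/-- A net convergence structure on `X`: assigns, for every directed preordered
index type, which nets converge to which points. -/
abbrev Conv (X : Type) : Type 1 :=
  ∀ (ι : Type) [Preorder ι] [IsDirected ι (· ≤ ·)] [Nonempty ι], (ι → X) → X → Prop

/-- `y` is a quasi-subnet of `x`: every tail set of `x` contains a tail set of `y`. -/
def IsQuasiSubnet {X : Type} {ι κ : Type} [Preorder ι] [Preorder κ]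
    (y : κ → X) (x : ι → X) : Prop :=
  ∀ i₀ : ι, ∃ k₀ : κ, ∀ k, k₀ ≤ k → ∃ i, i₀ ≤ i ∧ y k = x i

/-- The axioms of a (net) convergence structure. -/
structure IsConvStruct {X : Type} (C : Conv X) : Prop where
  const : ∀ (ι : Type) [Preorder ι] [IsDirected ι (· ≤ ·)] [Nonempty ι] (a : X),
    C ι (fun _ => a) a
  quasi : ∀ (ι κ : Type) [Preorder ι] [IsDirected ι (· ≤ ·)] [Nonempty ι]
      [Preorder κ] [IsDirected κ (· ≤ ·)] [Nonempty κ]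
      (x : ι → X) (y : κ → X) (a : X),
    C ι x a → IsQuasiSubnet y x → C κ y a
  mix : ∀ (ι : Type) [Preorder ι] [IsDirected ι (· ≤ ·)] [Nonempty ι]
      (x y z : ι → X) (a : X),
    C ι x a → C ι y a → (∀ i, z i = x i ∨ z i = y i) → C ι z a

/-- A linear convergence structure: a convergence structure for which the vector
space operations are continuous. -/
structure IsLinearConv {X : Type} [AddCommGroup X] [Module ℝ X] (C : Conv X)
    extends IsConvStruct C : Prop where
  add : ∀ (ι : Type) [Preorder ι] [IsDirected ι (· ≤ ·)] [Nonempty ι]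
      (x y : ι → X) (a b : X),
    C ι x a → C ι y b → C ι (fun i => x i + y i) (a + b)
  smul : ∀ (ι : Type) [Preorder ι] [IsDirected ι (· ≤ ·)] [Nonempty ι]
      (r : ι → ℝ) (x : ι → X) (r₀ : ℝ) (a : X),
    Tendsto r atTop (nhds r₀) → C ι x a → C ι (fun i => r i • x i) (r₀ • a)

/-- Local solidity of a convergence structure on a vector lattice. -/
def LocSolid {X : Type} [AddCommGroup X] [Lattice X] (C : Conv X) : Prop :=
  ∀ (ι : Type) [Preorder ι] [IsDirected ι (· ≤ ·)] [Nonempty ι]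
    (x y : ι → X), (∀ i, |y i| ≤ |x i|) → C ι x 0 → C ι y 0

/-- A convergence structure is Hausdorff when limits are unique. -/
def ConvHausdorff {X : Type} (C : Conv X) : Prop :=
  ∀ (ι : Type) [Preorder ι] [IsDirected ι (· ≤ ·)] [Nonempty ι]
    (x : ι → X) (a b : X), C ι x a → C ι x b → a = b

/-- A product ordered by the first coordinate. -/
def FstOrd (Γ A : Type) : Type := Γ × A

instance FstOrd.pre (Γ A : Type) [Preorder Γ] : Preorder (FstOrd Γ A) :=
  Preorder.lift (fun p : Γ × A => p.1)

instance FstOrd.dir (Γ A : Type) [Preorder Γ] [IsDirected Γ (· ≤ ·)] :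
    IsDirected (FstOrd Γ A) (· ≤ ·) :=
  ⟨fun p q => by
    obtain ⟨c, hc1, hc2⟩ := directed_of (· ≤ · : Γ → Γ → Prop) (Prod.fst p) (Prod.fst q)
    exact ⟨(c, Prod.snd p), hc1, hc2⟩⟩

instance FstOrd.nonempty (Γ A : Type) [Nonempty Γ] [Nonempty A] : Nonempty (FstOrd Γ A) :=
  inferInstanceAs (Nonempty (Γ × A))

/-- Order convergence of a net to `0`: eventual domination by a net decreasing to `0`. -/
def OConvZero {X : Type} [Lattice X] [AddCommGroup X] {ι : Type} [Preorder ι]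
    (z : ι → X) : Prop :=
  ∃ (κ : Type) (_ : Preorder κ) (_ : IsDirected κ (· ≤ ·)) (_ : Nonempty κ)
    (u : κ → X), Antitone u ∧ IsGLB (Set.range u) 0 ∧
      ∀ k, ∃ i₀, ∀ i, i₀ ≤ i → |z i| ≤ u k


section Aux
variable {X : Type} [AddCommGroup X] [Lattice X] [CovariantClass X X (· + ·) (· ≤ ·)]

lemma aux_inf_add (a b c : X) (ha : 0 ≤ a) (hb : 0 ≤ b) (hc : 0 ≤ c) :
    a ⊓ (b + c) ≤ a ⊓ b + a ⊓ c := by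
  have key : a ⊓ b + a ⊓ c = ((a + a) ⊓ (b + a)) ⊓ ((a + c) ⊓ (b + c)) := by
    rw [add_inf a c (a ⊓ b), inf_add a b a, inf_add a b c]
  rw [key]
  refine le_inf (le_inf ?_ ?_) (le_inf ?_ ?_)
  · exact inf_le_left.trans (le_add_of_nonneg_right ha)
  · exact inf_le_left.trans (le_add_of_nonneg_left hb)
  · exact inf_le_left.trans (le_add_of_nonneg_right hc)
  · exact inf_le_right

lemma aux_inf_nsmul (a b : X) (ha : 0 ≤ a) (hb : 0 ≤ b) :
    ∀ n : ℕ, a ⊓ (n • b) ≤ n • (a ⊓ b) := by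
  intro n
  induction n with
  | zero => simpa using inf_le_right
  | succ n ih =>
      have h1 : a ⊓ ((n + 1) • b) ≤ a ⊓ (n • b) + a ⊓ b := by
        rw [succ_nsmul]
        exact aux_inf_add a (n • b) b ha (nsmul_nonneg hb n) hb
      calc a ⊓ ((n + 1) • b) ≤ a ⊓ (n • b) + a ⊓ b := h1
        _ ≤ n • (a ⊓ b) + a ⊓ b := add_le_add ih le_rfl
        _ = (n + 1) • (a ⊓ b) := (succ_nsmul _ n).symm

variable [Module ℝ X] [PosSMulMono ℝ X]

lemma aux_smul_le_smul (a b : ℝ) (e : X) (hab : a ≤ b) (he : 0 ≤ e) :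
    a • e ≤ b • e := by
  have h1 : (0:X) ≤ (b - a) • e := smul_nonneg (by linarith) he
  have h2 : b • e = a • e + (b - a) • e := by rw [← add_smul]; ring_nf
  rw [h2]; exact le_add_of_nonneg_right h1

lemma aux_shrink (e z : X) (he : 0 ≤ e) (hz : 0 ≤ z)
    (N : ℕ) (hN : z ≤ (N : ℝ) • e) (c : ℝ) (hc0 : 0 < c) (hc1 : c ≤ 1/2)
    (hinf : z ⊓ e ≤ c • e) : z ≤ (3 * c) • e := by
  -- one-step contraction
  have step : ∀ M : ℝ, 0 ≤ M → z ≤ M • e → z ≤ ((M + 1) * c) • e := by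
    intro M hM hzM
    set n := ⌈M⌉₊ with hn
    have hMn : z ≤ n • e := by
      refine hzM.trans ?_
      rw [← Nat.cast_smul_eq_nsmul ℝ]
      exact aux_smul_le_smul M n e (Nat.le_ceil M) he
    have h1 : z = z ⊓ (n • e) := (inf_of_le_left hMn).symm
    have h2 : z ≤ n • (z ⊓ e) := h1.trans_le (aux_inf_nsmul z e hz he n)
    have h3 : n • (z ⊓ e) ≤ n • (c • e) := nsmul_le_nsmul_right hinf n
    have h5 : n • (c • e) = ((n : ℝ) * c) • e := by
      rw [← Nat.cast_smul_eq_nsmul ℝ, smul_smul]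
    have h6 : ((n : ℝ) * c) • e ≤ ((M + 1) * c) • e := by
      refine aux_smul_le_smul _ _ e ?_ he
      have := (Nat.ceil_lt_add_one hM).le
      nlinarith
    exact h2.trans (h3.trans_eq h5 |>.trans h6)
  -- iterate
  let f : ℕ → ℝ := fun k => Nat.rec (N : ℝ) (fun _ M => (M + 1) * c) k
  have hf0 : f 0 = (N : ℝ) := rfl
  have hfs : ∀ k, f (k + 1) = (f k + 1) * c := fun k => rfl
  have hfpos : ∀ k, 0 ≤ f k := by
    intro k
    induction k with
    | zero => exact Nat.cast_nonneg N
    | succ k ih => rw [hfs]; positivity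
  have hfz : ∀ k, z ≤ f k • e := by
    intro k
    induction k with
    | zero => simpa [hf0] using hN
    | succ k ih => rw [hfs]; exact step (f k) (hfpos k) ih
  have hbound : ∀ k, 1 ≤ k → f k ≤ c ^ k * N + 2 * c := by
    intro k hk
    induction k with
    | zero => omega
    | succ k ih =>
        rcases Nat.eq_zero_or_pos k with h1 | h1
        · subst h1
          rw [hfs, hf0]
          have h3 : (0:ℝ) ≤ (N:ℝ) := Nat.cast_nonneg N
          norm_num
          nlinarith
        · have hk1 : 1 ≤ k := h1
          have hik := ih hk1
          rw [hfs, pow_succ]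
          nlinarith [mul_le_mul_of_nonneg_right hik hc0.le,
            mul_nonneg hc0.le (by linarith : (0:ℝ) ≤ 1 - 2*c),
            mul_nonneg (pow_nonneg hc0.le k) (Nat.cast_nonneg N : (0:ℝ) ≤ (N:ℝ))]
  -- find k with c^k * N ≤ c
  obtain ⟨k, hkk⟩ : ∃ k, 1 ≤ k ∧ c ^ k * N ≤ c := by
    obtain ⟨k, hk⟩ := exists_pow_lt_of_lt_one (show (0:ℝ) < c / (N + 1) by positivity)
      (show c < 1 by linarith)
    refine ⟨k + 1, by omega, ?_⟩
    have h1 : c ^ (k + 1) ≤ c ^ k := pow_le_pow_of_le_one hc0.le (by linarith) (by omega)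
    have h2 : c ^ k < c / (N + 1) := hk
    have h3 : (0:ℝ) ≤ (N:ℝ) := Nat.cast_nonneg N
    have h4 : c ^ (k+1) * N ≤ (c / (N + 1)) * N := by
      apply mul_le_mul (by linarith) le_rfl h3 (by positivity)
    refine h4.trans ?_
    rw [div_mul_eq_mul_div, div_le_iff₀ (by positivity)]
    nlinarith
  have : f k ≤ 3 * c := by
    have := hbound k hkk.1
    linarith [hkk.2]
  exact (hfz k).trans (aux_smul_le_smul _ _ e this he)

end Aux

/-- In a vector lattice with a strong unit, relative uniform convergence is
unbounded. -/
theorem stmt12 {X : Type} [AddCommGroup X] [Lattice X]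
    [CovariantClass X X (· + ·) (· ≤ ·)] [Module ℝ X] [PosSMulMono ℝ X]
    (e : X) (he : 0 ≤ e) (hsu : ∀ x : X, ∃ n : ℕ, |x| ≤ n • e)
    (ι : Type) [Preorder ι] [IsDirected ι (· ≤ ·)] [Nonempty ι] (x : ι → X) (hpos : ∀ i, 0 ≤ x i)
    (h : ∀ u : X, 0 ≤ u → ∃ w : X, 0 ≤ w ∧ ∀ ε : ℝ, 0 < ε →
      ∃ i₀, ∀ i, i₀ ≤ i → |x i ⊓ u| ≤ ε • w) :
    ∃ w : X, 0 ≤ w ∧ ∀ ε : ℝ, 0 < ε → ∃ i₀, ∀ i, i₀ ≤ i → |x i| ≤ ε • w := by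
  obtain ⟨w, hw0, hw⟩ := h e he
  obtain ⟨m, hm⟩ := hsu w
  refine ⟨e, he, fun ε hε => ?_⟩
  set c := min (ε/3) (1/2) with hc
  have hc0 : 0 < c := lt_min (by linarith) (by norm_num)
  have hc12 : c ≤ 1/2 := min_le_right _ _
  have h3c : 3*c ≤ ε := by
    have := min_le_left (ε/3) (1/2)
    rw [hc]; linarith
  have hm1 : (0:ℝ) < (m:ℝ) + 1 := by positivity
  have hδ : 0 < c/((m:ℝ)+1) := by positivity
  obtain ⟨i₀, hi⟩ := hw _ hδ
  refine ⟨i₀, fun i hii => ?_⟩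
  have hxe : (0:X) ≤ x i ⊓ e := le_inf (hpos i) he
  have h1 : x i ⊓ e ≤ c • e := by
    have h2 := hi i hii
    rw [abs_of_nonneg hxe] at h2
    have hwm : w ≤ (m:ℝ) • e := by
      have := (le_abs_self w).trans hm
      rwa [← Nat.cast_smul_eq_nsmul ℝ] at this
    calc x i ⊓ e ≤ (c/((m:ℝ)+1)) • w := h2
      _ ≤ (c/((m:ℝ)+1)) • ((m:ℝ) • e) := smul_le_smul_of_nonneg_left hwm hδ.le
      _ = ((c/((m:ℝ)+1)) * m) • e := smul_smul _ _ e
      _ ≤ c • e := by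
          refine aux_smul_le_smul _ _ e ?_ he
          rw [div_mul_eq_mul_div, div_le_iff₀ hm1]
          nlinarith [(Nat.cast_nonneg m : (0:ℝ) ≤ (m:ℝ)), hc0.le]
  obtain ⟨n, hn⟩ := hsu (x i)
  have hxn : x i ≤ (n:ℝ) • e := by
    rw [Nat.cast_smul_eq_nsmul]; exact (le_abs_self _).trans hn
  have hfin := aux_shrink e (x i) he (hpos i) n hxn c hc0 hc12 h1
  rw [abs_of_nonneg (hpos i)]
  exact hfin.trans (aux_smul_le_smul _ _ e h3c he)
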